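/- Let λ < 0, k an odd positive integer, u₀ = (6λ)^{1/k}, and z₀ ≠ 0. Then the curve γ(t) = ( (3u₀/z₀)·e^{−λt}, (−2u₀/z₀²)·e^{−2λt}, z₀·e^{λt} ) is a solution of the ODE (ẋ, ẏ, ż) = λ(x,y,z) + z^{k-1}(x+yz)^{k+1}·(−z, 1, 0), and ‖γ(t)‖ → ∞ as t → +∞. -/

import Mathlib

/-- γ(t) = (3u₀/z₀·e^{−λt}, −2u₀/z₀²·e^{−2λt}, z₀e^{λt}) solves
the system ẋ = F(x) and escapes to infinity. -/
theorem stmt3 (l : ℝ) (hl : l < 0) (k : ℕ) (hk : Odd k) (hk1 : 1 ≤ k)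
    (u0 : ℝ) (hu0 : u0 ^ k = 6 * l) (z0 : ℝ) (hz0 : z0 ≠ 0)
    (γ : ℝ → ℝ × ℝ × ℝ)
    (hγ : ∀ t, γ t = (3 * u0 / z0 * Real.exp (-l * t),
                      -2 * u0 / z0 ^ 2 * Real.exp (-2 * l * t),
                      z0 * Real.exp (l * t)))
    (F : ℝ × ℝ × ℝ → ℝ × ℝ × ℝ)
    (hF : ∀ p, F p = (l * p.1 - p.2.2 ^ k * (p.1 + p.2.1 * p.2.2) ^ (k + 1),
                      l * p.2.1 + p.2.2 ^ (k - 1) * (p.1 + p.2.1 * p.2.2) ^ (k + 1),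
                      l * p.2.2)) :
    (∀ t, HasDerivAt γ (F (γ t)) t) ∧
    Filter.Tendsto (fun t => ‖γ t‖) Filter.atTop Filter.atTop := by
  have hγf : γ = fun t => ((3 * u0 / z0 * Real.exp (-l * t) : ℝ),
      (-2 * u0 / z0 ^ 2 * Real.exp (-2 * l * t) : ℝ),
      (z0 * Real.exp (l * t) : ℝ)) := funext hγ
  have hu0ne : u0 ≠ 0 := by
    intro h
    rw [h, zero_pow (by omega : k ≠ 0)] at hu0
    nlinarith
  constructor
  · intro t
    set E : ℝ := Real.exp (l * t) with hE
    have hEpos : 0 < E := Real.exp_pos _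
    have hEne : E ≠ 0 := ne_of_gt hEpos
    have hzE : z0 * E ≠ 0 := mul_ne_zero hz0 hEne
    have h1 : Real.exp (-l * t) = E⁻¹ := by
      rw [show -l * t = -(l * t) by ring, Real.exp_neg]
    have h2 : Real.exp (-2 * l * t) = E⁻¹ * E⁻¹ := by
      rw [show -2 * l * t = -(l * t) + -(l * t) by ring, Real.exp_add, Real.exp_neg]
    -- derivatives of the three coordinates
    have d1 : HasDerivAt (fun t => 3 * u0 / z0 * Real.exp (-l * t))
        (3 * u0 / z0 * (Real.exp (-l * t) * -l)) t := by
      have := (((hasDerivAt_id t).const_mul (-l)).exp).const_mul (3 * u0 / z0)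
      simpa using this
    have d2 : HasDerivAt (fun t => -2 * u0 / z0 ^ 2 * Real.exp (-2 * l * t))
        (-2 * u0 / z0 ^ 2 * (Real.exp (-2 * l * t) * (-2 * l))) t := by
      have := (((hasDerivAt_id t).const_mul (-2 * l)).exp).const_mul (-2 * u0 / z0 ^ 2)
      simpa using this
    have d3 : HasDerivAt (fun t => z0 * Real.exp (l * t))
        (z0 * (Real.exp (l * t) * l)) t := by
      have := (((hasDerivAt_id t).const_mul l).exp).const_mul z0
      simpa using this
    have dγ : HasDerivAt γ
        (3 * u0 / z0 * (Real.exp (-l * t) * -l),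
         -2 * u0 / z0 ^ 2 * (Real.exp (-2 * l * t) * (-2 * l)),
         z0 * (Real.exp (l * t) * l)) t := by
      rw [hγf]; exact d1.prodMk (d2.prodMk d3)
    have hsum : 3 * u0 / z0 * Real.exp (-l * t) +
        -2 * u0 / z0 ^ 2 * Real.exp (-2 * l * t) * (z0 * E) = u0 / (z0 * E) := by
      rw [h1, h2]; field_simp; ring
    have hkey : ∀ (m : ℕ) (w : ℝ), (z0 * E) ^ m * ((u0 / (z0 * E)) ^ m * w) = u0 ^ m * w := by
      intro m w
      rw [← mul_assoc, ← mul_pow, mul_div_cancel₀ u0 hzE]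
    have heq : F (γ t) =
        (3 * u0 / z0 * (Real.exp (-l * t) * -l),
         -2 * u0 / z0 ^ 2 * (Real.exp (-2 * l * t) * (-2 * l)),
         z0 * (Real.exp (l * t) * l)) := by
      rw [hγ, hF]
      simp only [← hE]
      refine Prod.ext ?_ (Prod.ext ?_ ?_)
      · simp only
        rw [hsum, pow_succ, hkey k, hu0, h1]
        field_simp
        ring
      · simp only
        rw [hsum, show k + 1 = (k - 1) + 2 by omega, pow_add, hkey (k - 1), h2]
        have hu1 : u0 ^ (k - 1) * u0 ^ 2 = 6 * l * u0 := by
          rw [← pow_add, show k - 1 + 2 = k + 1 by omega, pow_succ, hu0]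
        rw [show u0 ^ (k-1) * (u0 / (z0 * E)) ^ 2 = u0 ^ (k-1) * u0 ^ 2 / (z0*E)^2 by
          rw [div_pow]; ring, hu1]
        field_simp
        ring
      · simp only
        ring
    rw [heq]
    exact dγ
  · have hc : (0:ℝ) < |3 * u0 / z0| := by
      rw [abs_pos]
      exact div_ne_zero (by simpa using hu0ne) hz0
    have hexp : Filter.Tendsto (fun t : ℝ => Real.exp (-l * t)) Filter.atTop Filter.atTop :=
      Real.tendsto_exp_atTop.comp
        (Filter.Tendsto.const_mul_atTop (by linarith : (0:ℝ) < -l) Filter.tendsto_id)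
    have hlow : Filter.Tendsto (fun t : ℝ => |3 * u0 / z0| * Real.exp (-l * t))
        Filter.atTop Filter.atTop := hexp.const_mul_atTop hc
    refine Filter.tendsto_atTop_mono (fun t => ?_) hlow
    have h1 : ‖(γ t).1‖ = |3 * u0 / z0| * Real.exp (-l * t) := by
      rw [hγ, Real.norm_eq_abs, abs_mul, abs_of_pos (Real.exp_pos _)]
    exact h1 ▸ norm_fst_le (γ t)
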